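/- Let Ω ⊂ ℝⁿ be a bounded measurable set, let F ∈ L²(ℝⁿ) satisfy F ≥ 0 a.e. and ∫_{ℝⁿ} F dx = 1, and let p ≥ 1 be a real exponent. If φ_k, φ̄ are measurable functions on Ω with 0 ≤ φ_k ≤ 1 and 0 ≤ φ̄ ≤ 1 a.e., and φ_k → φ̄ weakly in L²(Ω), then 0 ≤ (F∗φ_k)(x) ≤ 1 for all x, and the p-th powers of the filtered densities converge uniformly on Ω: sup_{x∈Ω} |((F∗φ_k)(x))^p − ((F∗φ̄)(x))^p| → 0 as k → ∞. -/

import Mathlib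

open MeasureTheory Filter

private lemma aux_rpow_lip {p : ℝ} (hp : 1 ≤ p) {a b : ℝ}
    (ha : a ∈ Set.Icc (0:ℝ) 1) (hb : b ∈ Set.Icc (0:ℝ) 1) :
    |a ^ p - b ^ p| ≤ p * |a - b| := by
  have h1 : ∀ t ∈ Set.Icc (0:ℝ) 1,
      HasDerivWithinAt (fun s : ℝ => s ^ p) (p * t ^ (p-1)) (Set.Icc (0:ℝ) 1) t := fun t _ =>
    (Real.hasDerivAt_rpow_const (Or.inr hp)).hasDerivWithinAt
  have h2 : ∀ t ∈ Set.Icc (0:ℝ) 1, ‖p * t ^ (p-1)‖ ≤ p := by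
    intro t ht
    rw [Real.norm_eq_abs, abs_mul, abs_of_nonneg (by linarith : (0:ℝ) ≤ p),
      abs_of_nonneg (Real.rpow_nonneg ht.1 _)]
    nlinarith [Real.rpow_le_one ht.1 ht.2 (by linarith : (0:ℝ) ≤ p - 1)]
  have := Convex.norm_image_sub_le_of_norm_hasDerivWithin_le h1 h2 (convex_Icc 0 1) hb ha
  simpa [Real.norm_eq_abs] using this

/-- Compactifying property of the density filter: if `0 ≤ φ_k ≤ 1` a.e.,
`φ_k ⇀ φlim` weakly in `L²(Ω)`, and `F ∈ L²(ℝⁿ)` with `F ≥ 0` a.e. and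
`∫ F = 1`, then `0 ≤ F∗φ_k ≤ 1` everywhere and `(F∗φ_k)^p → (F∗φlim)^p`
uniformly on `Ω` for any real exponent `p ≥ 1`. -/
theorem filtered_powers_uniform_convergence
    (n : ℕ) (Ω : Set (Fin n → ℝ)) (hΩmeas : MeasurableSet Ω)
    (hΩbd : Bornology.IsBounded Ω)
    (F : (Fin n → ℝ) → ℝ) (hF : MemLp F 2 volume)
    (hFpos : ∀ᵐ x : Fin n → ℝ, 0 ≤ F x)
    (hFint : ∫ x : Fin n → ℝ, F x = 1)
    (p : ℝ) (hp : 1 ≤ p)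
    (φ : ℕ → (Fin n → ℝ) → ℝ) (φlim : (Fin n → ℝ) → ℝ)
    (hmem : ∀ k, MemLp (φ k) 2 (volume.restrict Ω))
    (hlim : MemLp φlim 2 (volume.restrict Ω))
    (hbox : ∀ k, ∀ᵐ x ∂(volume.restrict Ω), 0 ≤ φ k x ∧ φ k x ≤ 1)
    (hboxlim : ∀ᵐ x ∂(volume.restrict Ω), 0 ≤ φlim x ∧ φlim x ≤ 1)
    (hweak : ∀ g : (Fin n → ℝ) → ℝ, MemLp g 2 (volume.restrict Ω) →
      Tendsto (fun k => ∫ x in Ω, φ k x * g x) atTop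
        (nhds (∫ x in Ω, φlim x * g x))) :
    (∀ k, ∀ x : Fin n → ℝ,
        0 ≤ (∫ y in Ω, F (x - y) * φ k y) ∧ (∫ y in Ω, F (x - y) * φ k y) ≤ 1) ∧
    TendstoUniformlyOn
      (fun k x => (∫ y in Ω, F (x - y) * φ k y) ^ p)
      (fun x => (∫ y in Ω, F (x - y) * φlim y) ^ p) atTop Ω := by
  classical
  have hΩfin : volume Ω < ⊤ := hΩbd.measure_lt_top
  haveI : IsFiniteMeasure (volume.restrict Ω) :=
    ⟨by rwa [Measure.restrict_apply_univ]⟩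
  -- F is integrable
  have hFi : Integrable F volume := by
    by_contra h
    rw [integral_undef h] at hFint; norm_num at hFint
  have hmp : ∀ x : Fin n → ℝ,
      MeasurePreserving (fun y => x - y) (volume : Measure (Fin n → ℝ)) volume :=
    fun x => Measure.measurePreserving_sub_left volume x
  -- translates of integrable functions are integrable
  have htrans : ∀ (H : (Fin n → ℝ) → ℝ), Integrable H volume → ∀ x,
      Integrable (fun y => H (x - y)) volume := by
    intro H hH x
    exact ((hmp x).integrable_comp hH.1).mpr hH
  -- membership in L² of translates
  have hgmem : ∀ x, MemLp (fun y => F (x - y)) 2 (volume.restrict Ω) := fun x =>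
    (hF.comp_measurePreserving (hmp x)).restrict Ω
  -- key bound: |∫_Ω H(x-y) u y| ≤ ∫ |H| whenever |u| ≤ 1 a.e.
  have key : ∀ (H : (Fin n → ℝ) → ℝ), Integrable H volume →
      ∀ (u : (Fin n → ℝ) → ℝ), AEStronglyMeasurable u (volume.restrict Ω) →
      (∀ᵐ y ∂(volume.restrict Ω), |u y| ≤ 1) → ∀ x,
      Integrable (fun y => H (x - y) * u y) (volume.restrict Ω) ∧
      |∫ y in Ω, H (x - y) * u y| ≤ ∫ z, |H z| := by
    intro H hH u hu hub x
    have hHx : Integrable (fun y => H (x - y)) volume := htrans H hH x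
    have habs : Integrable (fun y => |H (x - y)|) volume := hHx.abs
    have hprod : Integrable (fun y => H (x - y) * u y) (volume.restrict Ω) := by
      refine Integrable.mono' habs.restrict ((hHx.restrict.1).mul hu) ?_
      filter_upwards [hub] with y hy
      rw [Real.norm_eq_abs, abs_mul]
      calc |H (x - y)| * |u y| ≤ |H (x - y)| * 1 :=
            mul_le_mul_of_nonneg_left hy (abs_nonneg _)
        _ = |H (x - y)| := mul_one _
    refine ⟨hprod, ?_⟩
    calc |∫ y in Ω, H (x - y) * u y| ≤ ∫ y in Ω, |H (x - y) * u y| := by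
          have := norm_integral_le_integral_norm (μ := volume.restrict Ω)
            (fun y => H (x - y) * u y)
          simpa only [Real.norm_eq_abs] using this
      _ ≤ ∫ y in Ω, |H (x - y)| := by
          refine integral_mono_ae hprod.abs habs.restrict ?_
          filter_upwards [hub] with y hy
          rw [abs_mul]
          calc |H (x - y)| * |u y| ≤ |H (x - y)| * 1 :=
                mul_le_mul_of_nonneg_left hy (abs_nonneg _)
            _ = |H (x - y)| := mul_one _
      _ ≤ ∫ y, |H (x - y)| := setIntegral_le_integral habs
            (Filter.Eventually.of_forall fun y => abs_nonneg _)
      _ = ∫ z, |H z| := integral_sub_left_eq_self (fun z => |H z|) volume x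
  -- |F| integrates to 1
  have hFabs : ∫ z, |F z| = 1 := by
    rw [← hFint]
    exact integral_congr_ae (by filter_upwards [hFpos] with z hz; exact abs_of_nonneg hz)
  -- a.e. boxes give |u| ≤ 1
  have habs_box : ∀ (u : (Fin n → ℝ) → ℝ),
      (∀ᵐ y ∂(volume.restrict Ω), 0 ≤ u y ∧ u y ≤ 1) →
      (∀ᵐ y ∂(volume.restrict Ω), |u y| ≤ 1) := by
    intro u hu
    filter_upwards [hu] with y hy
    rw [abs_le]; constructor <;> linarith [hy.1, hy.2]
  -- the bounds (part 1), for a general box function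
  have bounds : ∀ (u : (Fin n → ℝ) → ℝ), MemLp u 2 (volume.restrict Ω) →
      (∀ᵐ y ∂(volume.restrict Ω), 0 ≤ u y ∧ u y ≤ 1) → ∀ x,
      (∫ y in Ω, F (x - y) * u y) ∈ Set.Icc (0:ℝ) 1 := by
    intro u hu hbu x
    have hFx_nonneg : ∀ᵐ y ∂(volume : Measure (Fin n → ℝ)), 0 ≤ F (x - y) :=
      ((hmp x).quasiMeasurePreserving.tendsto_ae).eventually hFpos
    constructor
    · refine integral_nonneg_of_ae ?_
      filter_upwards [ae_restrict_of_ae hFx_nonneg, hbu] with y h1 h2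
      exact mul_nonneg h1 h2.1
    · have := (key F hFi u hu.1 (habs_box u hbu) x).2
      rw [hFabs] at this
      exact le_trans (le_abs_self _) this
  have part1 : ∀ k, ∀ x : Fin n → ℝ,
      0 ≤ (∫ y in Ω, F (x - y) * φ k y) ∧ (∫ y in Ω, F (x - y) * φ k y) ≤ 1 := by
    intro k x
    exact ⟨(bounds (φ k) (hmem k) (hbox k) x).1, (bounds (φ k) (hmem k) (hbox k) x).2⟩
  refine ⟨part1, ?_⟩
  -- pointwise convergence everywhere
  have hpt : ∀ x : Fin n → ℝ,
      Tendsto (fun k => ∫ y in Ω, F (x - y) * φ k y) atTop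
        (nhds (∫ y in Ω, F (x - y) * φlim y)) := by
    intro x
    have := hweak (fun y => F (x - y)) (hgmem x)
    simpa only [mul_comm] using this
  -- uniform convergence of the filtered densities themselves
  have hunif : TendstoUniformlyOn (fun k x => ∫ y in Ω, F (x - y) * φ k y)
      (fun x => ∫ y in Ω, F (x - y) * φlim y) atTop Ω := by
    rw [Metric.tendstoUniformlyOn_iff]
    intro ε hε
    set M : ℝ := (volume Ω).toReal + 1 with hM
    have hM0 : 0 < M := by positivity
    -- approximate F by a continuous compactly supported G
    obtain ⟨G, hGsupp, hGL1, hGcont, hGint⟩ :=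
      hFi.exists_hasCompactSupport_integral_sub_le
      (div_pos hε (by norm_num : (0:ℝ) < 16))
    -- uniform continuity of G
    obtain ⟨δ, hδ0, hδ⟩ := Metric.uniformContinuous_iff.mp
      (hGsupp.uniformContinuous_of_continuous hGcont) (ε/(8*M)) (div_pos hε (mul_pos (by norm_num) hM0))
    -- equicontinuity estimate
    have hequi : ∀ (u : (Fin n → ℝ) → ℝ), MemLp u 2 (volume.restrict Ω) →
        (∀ᵐ y ∂(volume.restrict Ω), 0 ≤ u y ∧ u y ≤ 1) →
        ∀ x x' : Fin n → ℝ, dist x x' < δ →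
        |(∫ y in Ω, F (x - y) * u y) - ∫ y in Ω, F (x' - y) * u y| ≤ ε/4 := by
      intro u hu hbu x x' hxx'
      have hub := habs_box u hbu
      have hFG : Integrable (fun z => F z - G z) volume := hFi.sub hGint
      have k1 := key (fun z => F z - G z) hFG u hu.1 hub x
      have k3 := key (fun z => F z - G z) hFG u hu.1 hub x'
      have kF1 := key F hFi u hu.1 hub x
      have kF3 := key F hFi u hu.1 hub x'
      -- the middle term
      set g2 : (Fin n → ℝ) → ℝ := fun y => (G (x - y) - G (x' - y)) * u y with hg2
      have hg2int : Integrable g2 (volume.restrict Ω) := by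
        have : Integrable (fun y =>
            F (x - y) * u y - F (x' - y) * u y
            - (F (x - y) - G (x - y)) * u y
            + (F (x' - y) - G (x' - y)) * u y) (volume.restrict Ω) :=
          ((kF1.1.sub kF3.1).sub k1.1).add k3.1
        refine this.congr (Filter.Eventually.of_forall fun y => ?_)
        simp only [hg2]; ring
      have hg2bd : |∫ y in Ω, g2 y| ≤ ε/8 := by
        have hbd : ∀ᵐ y ∂(volume.restrict Ω), |g2 y| ≤ ε/(8*M) := by
          filter_upwards [hub] with y hy
          have hdist : dist (x - y) (x' - y) < δ := by
            rw [dist_sub_right]; exact hxx'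
          have habs0 := hδ hdist
          rw [Real.dist_eq] at habs0
          rw [hg2, abs_mul]
          calc |G (x - y) - G (x' - y)| * |u y| ≤ (ε/(8*M)) * 1 :=
                mul_le_mul (le_of_lt habs0) hy (abs_nonneg _)
                  (le_of_lt (div_pos hε (mul_pos (by norm_num) hM0)))
            _ = ε/(8*M) := mul_one _
        have h1 : ∫ y in Ω, g2 y ≤ (ε/(8*M)) * (volume Ω).toReal := by
          calc ∫ y in Ω, g2 y ≤ ∫ _y in Ω, (ε/(8*M)) :=
                integral_mono_ae hg2int (integrable_const _)
                  (by filter_upwards [hbd] with y hy; exact le_trans (le_abs_self _) hy)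
            _ = (volume Ω).toReal • (ε/(8*M)) := setIntegral_const _
            _ = (ε/(8*M)) * (volume Ω).toReal := by rw [smul_eq_mul, mul_comm]
        have h2 : -((ε/(8*M)) * (volume Ω).toReal) ≤ ∫ y in Ω, g2 y := by
          calc -((ε/(8*M)) * (volume Ω).toReal)
              = (volume Ω).toReal • (-(ε/(8*M))) := by rw [smul_eq_mul]; ring
            _ = ∫ _y in Ω, (-(ε/(8*M))) := (setIntegral_const _).symm
            _ ≤ ∫ y in Ω, g2 y :=
                integral_mono_ae (integrable_const _) hg2int
                  (by filter_upwards [hbd] with y hy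
                      exact (abs_le.mp hy).1)
        have hvol : (ε/(8*M)) * (volume Ω).toReal ≤ ε/8 := by
          have hle : (volume Ω).toReal ≤ M := by
            rw [hM]; linarith
          calc (ε/(8*M)) * (volume Ω).toReal ≤ (ε/(8*M)) * M :=
                mul_le_mul_of_nonneg_left hle
                  (le_of_lt (div_pos hε (mul_pos (by norm_num) hM0)))
            _ = ε/8 := by field_simp
        rw [abs_le]
        exact ⟨by linarith, by linarith⟩
      -- decomposition
      have hdecomp : (∫ y in Ω, F (x - y) * u y) - ∫ y in Ω, F (x' - y) * u y
          = (∫ y in Ω, (F (x - y) - G (x - y)) * u y) + (∫ y in Ω, g2 y)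
            - ∫ y in Ω, (F (x' - y) - G (x' - y)) * u y := by
        have i1 : ∫ y in Ω, ((F (x - y) - G (x - y)) * u y + g2 y)
            = (∫ y in Ω, (F (x - y) - G (x - y)) * u y) + ∫ y in Ω, g2 y :=
          integral_add k1.1 hg2int
        have hsum_int : Integrable
            (fun y => (F (x - y) - G (x - y)) * u y + g2 y) (volume.restrict Ω) :=
          k1.1.add hg2int
        have i2 : ∫ y in Ω, ((F (x - y) - G (x - y)) * u y + g2 y
              - (F (x' - y) - G (x' - y)) * u y)
            = (∫ y in Ω, ((F (x - y) - G (x - y)) * u y + g2 y))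
              - ∫ y in Ω, (F (x' - y) - G (x' - y)) * u y :=
          integral_sub hsum_int k3.1
        have i0 : ∫ y in Ω, (F (x - y) * u y - F (x' - y) * u y)
            = (∫ y in Ω, F (x - y) * u y) - ∫ y in Ω, F (x' - y) * u y :=
          integral_sub kF1.1 kF3.1
        have icong : ∫ y in Ω, (F (x - y) * u y - F (x' - y) * u y)
            = ∫ y in Ω, ((F (x - y) - G (x - y)) * u y + g2 y
              - (F (x' - y) - G (x' - y)) * u y) :=
          integral_congr_ae (Filter.Eventually.of_forall fun y => by
            simp only [hg2]; ring)
        rw [← i0, icong, i2, i1]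
      have hFGnorm : ∫ z, |F z - G z| ≤ ε/16 := by
        simpa [Real.norm_eq_abs] using hGL1
      have hk1 : |∫ y in Ω, (F (x - y) - G (x - y)) * u y| ≤ ε/16 := le_trans k1.2 hFGnorm
      have hk3 : |∫ y in Ω, (F (x' - y) - G (x' - y)) * u y| ≤ ε/16 := le_trans k3.2 hFGnorm
      rw [hdecomp]
      calc |(∫ y in Ω, (F (x - y) - G (x - y)) * u y) + (∫ y in Ω, g2 y)
            - ∫ y in Ω, (F (x' - y) - G (x' - y)) * u y|
          ≤ |(∫ y in Ω, (F (x - y) - G (x - y)) * u y) + (∫ y in Ω, g2 y)|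
            + |∫ y in Ω, (F (x' - y) - G (x' - y)) * u y| := abs_sub _ _
        _ ≤ |∫ y in Ω, (F (x - y) - G (x - y)) * u y| + |∫ y in Ω, g2 y|
            + |∫ y in Ω, (F (x' - y) - G (x' - y)) * u y| := by
            have := abs_add_le (∫ y in Ω, (F (x - y) - G (x - y)) * u y) (∫ y in Ω, g2 y)
            linarith
        _ ≤ ε/16 + ε/8 + ε/16 := by linarith
        _ = ε/4 := by ring
    -- totally bounded: finite δ-net for Ω
    have htb : TotallyBounded Ω := by
      have hcomp : IsCompact (closure Ω) :=
        Metric.isCompact_of_isClosed_isBounded isClosed_closure hΩbd.closure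
      exact (hcomp.totallyBounded).subset subset_closure
    obtain ⟨t, htfin, htcov⟩ := Metric.totallyBounded_iff.mp htb δ hδ0
    -- pointwise convergence at the (finitely many) centers
    have hcenters : ∀ᶠ k in atTop, ∀ z ∈ t,
        dist (∫ y in Ω, F (z - y) * φlim y) (∫ y in Ω, F (z - y) * φ k y) < ε/4 := by
      rw [Filter.eventually_all_finite htfin]
      intro z _
      have := Metric.tendsto_nhds.mp (hpt z) (ε/4) (by linarith)
      filter_upwards [this] with k hk
      rw [dist_comm] at hk; exact hk
    filter_upwards [hcenters] with k hk x hx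
    obtain ⟨z, hzt, hzx⟩ : ∃ z ∈ t, x ∈ Metric.ball z δ := by
      have := htcov hx
      simpa using this
    rw [Metric.mem_ball] at hzx
    have e1 := hequi φlim hlim hboxlim x z hzx
    have e2 := hequi (φ k) (hmem k) (hbox k) x z hzx
    have e3 := hk z hzt
    rw [Real.dist_eq] at e3 ⊢
    have : |(∫ y in Ω, F (x - y) * φlim y) - ∫ y in Ω, F (x - y) * φ k y|
        ≤ |(∫ y in Ω, F (x - y) * φlim y) - ∫ y in Ω, F (z - y) * φlim y|
          + |(∫ y in Ω, F (z - y) * φlim y) - ∫ y in Ω, F (z - y) * φ k y|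
          + |(∫ y in Ω, F (z - y) * φ k y) - ∫ y in Ω, F (x - y) * φ k y| := by
      have h12 := abs_sub_le (∫ y in Ω, F (x - y) * φlim y)
        (∫ y in Ω, F (z - y) * φlim y) (∫ y in Ω, F (x - y) * φ k y)
      have h23 := abs_sub_le (∫ y in Ω, F (z - y) * φlim y)
        (∫ y in Ω, F (z - y) * φ k y) (∫ y in Ω, F (x - y) * φ k y)
      linarith
    have e2' : |(∫ y in Ω, F (z - y) * φ k y) - ∫ y in Ω, F (x - y) * φ k y| ≤ ε/4 := by
      rw [abs_sub_comm]; exact e2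
    linarith
  -- compose with the Lipschitz map `t ↦ t ^ p` on `[0,1]`
  rw [Metric.tendstoUniformlyOn_iff]
  intro ε hε
  have hp0 : (0:ℝ) < p := lt_of_lt_of_le one_pos hp
  have hε' : (0:ℝ) < ε / (p + 1) := div_pos hε (by linarith)
  have := Metric.tendstoUniformlyOn_iff.mp hunif (ε / (p + 1)) hε'
  filter_upwards [this] with k hk x hx
  have h1 := bounds φlim hlim hboxlim x
  have h2 := bounds (φ k) (hmem k) (hbox k) x
  have hlip := aux_rpow_lip hp h1 h2
  rw [Real.dist_eq] at *
  calc |(∫ y in Ω, F (x - y) * φlim y) ^ p - (∫ y in Ω, F (x - y) * φ k y) ^ p|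
      ≤ p * |(∫ y in Ω, F (x - y) * φlim y) - ∫ y in Ω, F (x - y) * φ k y| := hlip
    _ < p * (ε / (p + 1)) := by
        have := hk x hx
        exact mul_lt_mul_of_pos_left this hp0
    _ < ε := by
        rw [mul_div_assoc', div_lt_iff₀ (by linarith : (0:ℝ) < p + 1)]
        nlinarith
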